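/- Let k ≥ 3, let C_k be the cycle graph on k vertices, and let G be a finite simple graph. If φ is an edge-injective homomorphism from C_k to G and σ is a graph automorphism of C_k with φ ∘ σ = φ, then σ is the identity. Consequently, since the automorphism group of C_k has order 2k, the number |EdgInj(C_k, G)| is divisible by 2k, and |EdgInj(C_k, G)| equals 2k times the number of orbits of the automorphism group of C_k acting on EdgInj(C_k, G) by precomposition (these orbits are the edge-disjoint k-cycles of G). -/

import Mathlib

open SimpleGraph

/-- A homomorphism `φ : H →g G` is *edge-injective* if distinct edges of `H`
are mapped to distinct edges of `G`. -/
def EdgeInjective {V W : Type*} {H : SimpleGraph V} {G : SimpleGraph W} (φ : H →g G) : Prop :=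
  ∀ e ∈ H.edgeSet, ∀ f ∈ H.edgeSet, Sym2.map φ e = Sym2.map φ f → e = f

section Aux

variable {n : ℕ}

open scoped Fin.CommRing Fin.NatCast Fin.IntCast

private lemma cyc_two_ne_zero : (2 : Fin (n+3)) ≠ 0 := by
  intro h
  have := congrArg Fin.val h
  simp [Fin.val_two] at this
  rw [Nat.mod_eq_of_lt (by omega)] at this
  omega

private lemma cyc_adj_succ (x : Fin (n+3)) : (cycleGraph (n+3)).Adj x (x+1) :=
  cycleGraph_adj.2 (Or.inr (add_sub_cancel_left x 1))

private lemma aut_step (σ : cycleGraph (n+3) ≃g cycleGraph (n+3)) (y : Fin (n+3)) :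
    σ (y+1) + σ (y-1) = σ y + σ y := by
  have h1 : (cycleGraph (n+3)).Adj (σ (y+1)) (σ y) := σ.map_rel_iff.2 (cyc_adj_succ y).symm
  have h2 : (cycleGraph (n+3)).Adj (σ (y-1)) (σ y) := by
    refine σ.map_rel_iff.2 ?_
    have := cyc_adj_succ (y-1)
    rwa [sub_add_cancel] at this
  have hne : σ (y+1) ≠ σ (y-1) := by
    intro h
    have h' := σ.injective h
    exact cyc_two_ne_zero (by linear_combination h')
  rw [cycleGraph_adj] at h1 h2
  rcases h1 with h1 | h1 <;> rcases h2 with h2 | h2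
  · exact absurd (by linear_combination h1 - h2) hne
  · linear_combination h1 - h2
  · linear_combination h2 - h1
  · exact absurd (by linear_combination h2 - h1) hne

private lemma aut_formula (σ : cycleGraph (n+3) ≃g cycleGraph (n+3)) (x : Fin (n+3)) :
    σ x = σ 0 + (σ 1 - σ 0) * x := by
  suffices h : ∀ m : ℕ, σ (m : Fin (n+3)) = σ 0 + (σ 1 - σ 0) * (m : Fin (n+3)) by
    have := h x.val
    rwa [Fin.cast_val_eq_self] at this
  intro m
  induction m using Nat.twoStepInduction with
  | zero => simp
  | one => push_cast; ring
  | more m ih1 ih2 =>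
    have key := aut_step σ ((m : Fin (n+3)) + 1)
    have e1 : ((m : Fin (n+3)) + 1) + 1 = ((m + 2 : ℕ) : Fin (n+3)) := by push_cast; ring
    have e2 : ((m : Fin (n+3)) + 1) - 1 = ((m : ℕ) : Fin (n+3)) := by ring
    have e3 : ((m : Fin (n+3)) + 1) = ((m + 1 : ℕ) : Fin (n+3)) := by push_cast; ring
    rw [e1, e2, e3] at key
    have : σ ((m + 2 : ℕ) : Fin (n+3)) =
        σ ((m+1 : ℕ) : Fin (n+3)) + σ ((m+1 : ℕ) : Fin (n+3)) - σ ((m : ℕ) : Fin (n+3)) := by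
      linear_combination key
    rw [this, ih1, ih2]
    push_cast
    ring

private lemma aut_d (σ : cycleGraph (n+3) ≃g cycleGraph (n+3)) :
    σ 1 - σ 0 = 1 ∨ σ 1 - σ 0 = -1 := by
  have h : (cycleGraph (n+3)).Adj (σ 0) (σ 1) := σ.map_rel_iff.2 (by
    have := cyc_adj_succ (0 : Fin (n+3)); rwa [zero_add] at this)
  rw [cycleGraph_adj] at h
  rcases h with h | h
  · right; linear_combination -h
  · left; exact h

/-- The automorphism `x ↦ c + x` or `x ↦ c - x` of the cycle graph. -/
private def cycAut (c : Fin (n+3)) (b : Bool) : cycleGraph (n+3) ≃g cycleGraph (n+3) where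
  toEquiv := ((if b then Equiv.refl (Fin (n+3)) else Equiv.neg (Fin (n+3)))).trans
    (Equiv.addLeft c)
  map_rel_iff' := by
    intro x y
    cases b
    · show (cycleGraph (n+3)).Adj (c + -x) (c + -y) ↔ (cycleGraph (n+3)).Adj x y
      rw [cycleGraph_adj, cycleGraph_adj]
      constructor <;> rintro (h | h)
      · right; linear_combination h
      · left; linear_combination h
      · right; linear_combination h
      · left; linear_combination h
    · show (cycleGraph (n+3)).Adj (c + x) (c + y) ↔ (cycleGraph (n+3)).Adj x y
      rw [cycleGraph_adj, cycleGraph_adj]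
      constructor <;> rintro (h | h)
      · left; linear_combination h
      · right; linear_combination h
      · left; linear_combination h
      · right; linear_combination h

private lemma cycAut_apply (c : Fin (n+3)) (b : Bool) (x : Fin (n+3)) :
    cycAut c b x = c + (if b then x else -x) := by
  cases b <;> rfl

private lemma neg_one_ne_one : (-1 : Fin (n+3)) ≠ 1 :=
  fun e => cyc_two_ne_zero (by linear_combination -e)

private noncomputable def autEquiv :
    (cycleGraph (n+3) ≃g cycleGraph (n+3)) ≃ Fin (n+3) × Bool where
  toFun σ := (σ 0, decide (σ 1 - σ 0 = 1))
  invFun p := cycAut p.1 p.2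
  left_inv σ := by
    show cycAut (σ 0) (decide (σ 1 - σ 0 = 1)) = σ
    rcases aut_d σ with h | h
    · rw [decide_eq_true h]
      refine RelIso.ext fun x => ?_
      rw [cycAut_apply, aut_formula σ x, h]
      simp
    · rw [decide_eq_false (fun e => neg_one_ne_one (h.symm.trans e))]
      refine RelIso.ext fun x => ?_
      rw [cycAut_apply, aut_formula σ x, h]
      simp
  right_inv p := by
    rcases p with ⟨c, b⟩
    cases b
    · have h0 : cycAut c false 0 = c := by rw [cycAut_apply]; simp
      have h1 : cycAut c false 1 = c - 1 := by rw [cycAut_apply]; simp; ring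
      simp only [h0, h1, Prod.mk.injEq]
      refine ⟨trivial, decide_eq_false fun e => neg_one_ne_one (n := n) ?_⟩
      linear_combination e
    · have h0 : cycAut c true 0 = c := by rw [cycAut_apply]; simp
      have h1 : cycAut c true 1 = c + 1 := by rw [cycAut_apply]; simp
      simp only [h0, h1, Prod.mk.injEq]
      exact ⟨trivial, decide_eq_true (by ring)⟩

private lemma card_aut : Nat.card (cycleGraph (n+3) ≃g cycleGraph (n+3)) = 2 * (n+3) := by
  rw [Nat.card_congr autEquiv, Nat.card_prod]
  simp [Nat.card_eq_fintype_card]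
  ring

private lemma cyc_free {V : Type*} {G : SimpleGraph V} (φ : cycleGraph (n+3) →g G)
    (hφ : EdgeInjective φ) (σ : cycleGraph (n+3) ≃g cycleGraph (n+3))
    (h : ∀ x, φ (σ x) = φ x) : ∀ x, σ x = x := by
  have key : ∀ x : Fin (n+3), s(σ x, σ (x+1)) = s(x, x+1) := by
    intro x
    have hadj : (cycleGraph (n+3)).Adj x (x+1) := cyc_adj_succ x
    have hadj' : (cycleGraph (n+3)).Adj (σ x) (σ (x+1)) := σ.map_rel_iff.2 hadj
    refine hφ _ ((mem_edgeSet _).2 hadj') _ ((mem_edgeSet _).2 hadj) ?_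
    rw [Sym2.map_pair_eq, Sym2.map_pair_eq, h, h]
  have h0 := key 0
  rw [zero_add] at h0
  rcases Sym2.eq_iff.1 h0 with ⟨ha, hb⟩ | ⟨ha, hb⟩
  · intro x
    rw [aut_formula σ x, ha, hb]
    ring
  · exfalso
    have h1 := key 1
    rcases Sym2.eq_iff.1 h1 with ⟨hc, _⟩ | ⟨hc, _⟩
    · rw [hb] at hc
      exact one_ne_zero hc.symm
    · rw [hb] at hc
      exact cyc_two_ne_zero (by linear_combination -hc)

private lemma edgeInjective_comp {V : Type*} {G : SimpleGraph V} (φ : cycleGraph (n+3) →g G)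
    (hφ : EdgeInjective φ) (σ : cycleGraph (n+3) ≃g cycleGraph (n+3)) :
    EdgeInjective (φ.comp σ.toHom) := by
  have key : ∀ e ∈ (cycleGraph (n+3)).edgeSet, Sym2.map ⇑σ e ∈ (cycleGraph (n+3)).edgeSet := by
    intro e
    induction e using Sym2.ind with
    | _ a b =>
      intro h
      rw [Sym2.map_pair_eq, mem_edgeSet]
      exact σ.map_rel_iff.2 ((mem_edgeSet _).1 h)
  intro e he f hf hef
  have h2 : Sym2.map ⇑φ (Sym2.map ⇑σ e) = Sym2.map ⇑φ (Sym2.map ⇑σ f) := by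
    rw [Sym2.map_map, Sym2.map_map]
    exact hef
  have := hφ _ (key e he) _ (key f hf) h2
  exact Sym2.map.injective σ.injective this

end Aux

/-- For `k ≥ 3`: the automorphism group of the cycle `C_k` (of order `2k`) acts freely on the
edge-injective homomorphisms from `C_k` to `G` by precomposition; consequently
`|EdgInj(C_k, G)|` is divisible by `2k` and equals `2k` times the number of orbits
(the edge-disjoint `k`-cycles of `G`). -/
theorem edgeInjective_cycle_free_action
    {V : Type*} [Fintype V] (G : SimpleGraph V) (k : ℕ) (hk : 3 ≤ k) :
    (∀ (φ : cycleGraph k →g G), EdgeInjective φ →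
      ∀ σ : cycleGraph k ≃g cycleGraph k, (∀ x, φ (σ x) = φ x) → ∀ x, σ x = x) ∧
    Nat.card (cycleGraph k ≃g cycleGraph k) = 2 * k ∧
    (2 * k ∣ Nat.card {φ : cycleGraph k →g G // EdgeInjective φ}) ∧
    Nat.card {φ : cycleGraph k →g G // EdgeInjective φ} =
      2 * k * Nat.card (Quot (fun φ ψ : {φ : cycleGraph k →g G // EdgeInjective φ} =>
        ∃ σ : cycleGraph k ≃g cycleGraph k, ∀ x, φ.1 (σ x) = ψ.1 x)) := by
  obtain ⟨n, rfl⟩ : ∃ n, k = n + 3 := ⟨k - 3, by omega⟩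
  set X := {φ : cycleGraph (n+3) →g G // EdgeInjective φ} with hX
  set r : X → X → Prop := fun φ ψ =>
    ∃ σ : cycleGraph (n+3) ≃g cycleGraph (n+3), ∀ x, φ.1 (σ x) = ψ.1 x with hr
  have hequiv : Equivalence r := by
    refine ⟨fun φ => ⟨RelIso.refl _, fun x => rfl⟩, ?_, ?_⟩
    · rintro φ ψ ⟨σ, hσ⟩
      refine ⟨σ.symm, fun x => ?_⟩
      have := hσ (σ.symm x)
      rw [RelIso.apply_symm_apply] at this
      exact this.symm
    · rintro φ ψ χ ⟨σ, hσ⟩ ⟨τ, hτ⟩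
      exact ⟨τ.trans σ, fun x => (hσ (τ x)).trans (hτ x)⟩
  have hout : ∀ φ : X, r (Quot.out (Quot.mk r φ)) φ :=
    fun φ => hequiv.eqvGen_iff.1 (Quot.eqvGen_exact (Quot.out_eq _))
  set F : Quot r × (cycleGraph (n+3) ≃g cycleGraph (n+3)) → X := fun p =>
    ⟨(Quot.out p.1).1.comp p.2.toHom, edgeInjective_comp _ (Quot.out p.1).2 p.2⟩ with hF
  have hbij : Function.Bijective F := by
    constructor
    · rintro ⟨q, σ⟩ ⟨q', τ⟩ h
      have h' := Subtype.ext_iff.1 h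
      have happ : ∀ x, (Quot.out q).1 (σ x) = (Quot.out q').1 (τ x) :=
        fun x => DFunLike.congr_fun h' x
      have hqq : q = q' := by
        rw [← Quot.out_eq q, ← Quot.out_eq q']
        apply Quot.sound
        refine ⟨τ.symm.trans σ, fun x => ?_⟩
        have := happ (τ.symm x)
        rwa [RelIso.apply_symm_apply] at this
      subst hqq
      have hfree := cyc_free (Quot.out q).1 (Quot.out q).2 (τ.symm.trans σ) (fun x => by
        have := happ (τ.symm x)
        rwa [RelIso.apply_symm_apply] at this)
      have hst : σ = τ := by
        refine RelIso.ext fun x => ?_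
        have := hfree (τ x)
        rw [show (τ.symm.trans σ) (τ x) = σ (τ.symm (τ x)) from rfl,
          RelIso.symm_apply_apply] at this
        exact this
      rw [hst]
    · rintro ⟨φ, hφ⟩
      obtain ⟨σ, hσ⟩ := hout ⟨φ, hφ⟩
      exact ⟨(Quot.mk r ⟨φ, hφ⟩, σ), Subtype.ext (RelHom.ext hσ)⟩
  have hcard : Nat.card X =
      Nat.card (Quot r) * Nat.card (cycleGraph (n+3) ≃g cycleGraph (n+3)) := by
    rw [← Nat.card_prod]
    exact (Nat.card_eq_of_bijective F hbij).symm
  rw [card_aut] at hcard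
  refine ⟨fun φ hφ σ h => cyc_free φ hφ σ h, card_aut, ?_, ?_⟩
  · rw [hcard]; exact dvd_mul_left _ _
  · rw [hcard]; ring
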